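/- For a non-negative integer β ≥ 1, the partial fraction decomposition 1/((z;q)_β) = Σ_{b=0}^{β-1} 1/((1-q^b z) · (q^{-b};q)_b · (q;q)_{β-b-1}) holds as an identity of rational functions in z over ℚ(q). -/

import Mathlib

open Finset

noncomputable section

/-- The field `ℚ(q,z)`: rational functions in `z` over `ℚ(q)`. -/
abbrev L : Type := RatFunc (RatFunc ℚ)

/-- The indeterminate `q`. -/
noncomputable def q : L := RatFunc.C RatFunc.X

/-- The indeterminate `z`. -/
noncomputable def z : L := RatFunc.X

/-- The q-Pochhammer symbol `(x;q)_n = ∏_{i=0}^{n-1} (1 - q^i x)`. -/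
noncomputable def poch (x : L) (n : ℕ) : L := ∏ i ∈ Finset.range n, (1 - q ^ i * x)

namespace PFaux

lemma ratfunc_C_inj {K : Type*} [CommRing K] [IsDomain K] :
    Function.Injective (RatFunc.C (K := K)) := by
  intro a b h
  apply Polynomial.C_injective
  apply RatFunc.algebraMap_injective K
  rw [RatFunc.algebraMap_C, RatFunc.algebraMap_C]
  exact h

lemma q_ne_zero : q ≠ 0 := by
  intro h
  have hC : (RatFunc.C (RatFunc.X : RatFunc ℚ) : L) = RatFunc.C (0 : RatFunc ℚ) := by
    rw [map_zero]; exact h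
  exact RatFunc.X_ne_zero (ratfunc_C_inj hC)

lemma q_pow_inj {i j : ℕ} (h : q ^ i = q ^ j) : i = j := by
  unfold q at h
  simp only [← map_pow] at h
  have h2 := ratfunc_C_inj h
  have h3 : (algebraMap (Polynomial ℚ) (RatFunc ℚ)) (Polynomial.X ^ i) =
      (algebraMap (Polynomial ℚ) (RatFunc ℚ)) (Polynomial.X ^ j) := by
    rw [map_pow, map_pow, RatFunc.algebraMap_X]; exact h2
  have h4 := RatFunc.algebraMap_injective ℚ h3
  have := congrArg Polynomial.natDegree h4
  simpa [Polynomial.natDegree_X_pow] using this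

lemma q_pow_ne_zero (i : ℕ) : q ^ i ≠ 0 := pow_ne_zero _ q_ne_zero

lemma one_sub_q_pow_ne_zero {i j : ℕ} (h : i ≠ j) : (1 : L) - q ^ i * (q ^ j)⁻¹ ≠ 0 := by
  intro hc
  apply h
  apply q_pow_inj
  have h1 : q ^ i * (q ^ j)⁻¹ = 1 := by linear_combination -hc
  exact (mul_inv_eq_one₀ (q_pow_ne_zero j)).mp h1

lemma poch_inv_ne_zero (b n : ℕ) (h : n ≤ b) : poch (q ^ b)⁻¹ n ≠ 0 := by
  unfold poch
  apply Finset.prod_ne_zero_iff.mpr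
  intro i hi
  exact one_sub_q_pow_ne_zero (by simp at hi; omega)

lemma poch_q_ne_zero (n : ℕ) : poch q n ≠ 0 := by
  unfold poch
  apply Finset.prod_ne_zero_iff.mpr
  intro i _
  have : q ^ i * q = q ^ (i + 1) * (q ^ 0)⁻¹ := by
    rw [pow_succ, pow_zero, inv_one, mul_one]
  rw [this]
  exact one_sub_q_pow_ne_zero (by omega)

lemma one_sub_q_pow_z_ne_zero (i : ℕ) : (1 : L) - q ^ i * z ≠ 0 := by
  intro hc
  have h1 : q ^ i * z = 1 := by linear_combination -hc
  have h2 : (algebraMap (Polynomial (RatFunc ℚ)) L)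
      (Polynomial.C (RatFunc.X ^ i) * Polynomial.X) =
      (algebraMap (Polynomial (RatFunc ℚ)) L) 1 := by
    rw [map_one, map_mul, RatFunc.algebraMap_C, RatFunc.algebraMap_X, map_pow]
    exact h1
  have h3 := RatFunc.algebraMap_injective (RatFunc ℚ) h2
  have h4 := congrArg Polynomial.natDegree h3
  have hC : ((RatFunc.X : RatFunc ℚ) ^ i) ≠ 0 := pow_ne_zero _ RatFunc.X_ne_zero
  rw [Polynomial.natDegree_C_mul_X _ hC, Polynomial.natDegree_one] at h4
  exact one_ne_zero h4

lemma aux_pf {K : Type*} [Field K] (a c x : K) (ha : a ≠ 0) (hc : c ≠ 0)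
    (h1 : (1:K) - c * a⁻¹ ≠ 0) (h2 : (1:K) - a * c⁻¹ ≠ 0) :
    (1 - c * x) * ((1:K) - c * a⁻¹)⁻¹ = 1 - ((1:K) - a * c⁻¹)⁻¹ * (1 - a * x) := by
  have hd : a - c ≠ 0 := by
    intro h
    apply h2
    rw [sub_eq_zero] at h
    rw [h, mul_inv_cancel₀ hc, sub_self]
  have hca : (1:K) - c * a⁻¹ = (a - c) * a⁻¹ := by field_simp
  have hac : (1:K) - a * c⁻¹ = (-(a - c)) * c⁻¹ := by field_simp; ring
  rw [hca, hac, mul_inv, mul_inv, inv_neg, inv_inv, inv_inv]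
  have hu := mul_inv_cancel₀ hd
  linear_combination hu

lemma key : ∀ β : ℕ, 1 ≤ β → ∀ x : L,
    ∑ b ∈ Finset.range β, (∏ i ∈ (Finset.range β).erase b, (1 - q ^ i * x)) *
      (poch (q ^ b)⁻¹ b * poch q (β - b - 1))⁻¹ = 1 := by
  intro β hβ
  induction β, hβ using Nat.le_induction with
  | base => intro x; simp [poch]
  | succ β hβ ih =>
    intro x
    have hranges : (Finset.range (β + 1)).erase β = Finset.range β := by
      rw [Finset.range_add_one, Finset.erase_insert (by simp)]
    have hIHspec := ih (q ^ β)⁻¹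
    have hpochβ : poch (q ^ β)⁻¹ β ≠ 0 := poch_inv_ne_zero β β le_rfl
    have hsum_coeff : ∑ b ∈ Finset.range β,
        ((1:L) - q ^ b * (q ^ β)⁻¹)⁻¹ * (poch (q ^ b)⁻¹ b * poch q (β - b - 1))⁻¹ =
        (poch (q ^ β)⁻¹ β)⁻¹ := by
      have hco : ∀ b ∈ Finset.range β,
          (∏ i ∈ (Finset.range β).erase b, (1 - q ^ i * (q ^ β)⁻¹)) *
            (poch (q ^ b)⁻¹ b * poch q (β - b - 1))⁻¹ =
          poch (q ^ β)⁻¹ β * (((1:L) - q ^ b * (q ^ β)⁻¹)⁻¹ *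
            (poch (q ^ b)⁻¹ b * poch q (β - b - 1))⁻¹) := by
        intro b hb
        have hbne : b ≠ β := by simp at hb; omega
        have hfac : ((1:L) - q ^ b * (q ^ β)⁻¹) *
            ∏ i ∈ (Finset.range β).erase b, (1 - q ^ i * (q ^ β)⁻¹) = poch (q ^ β)⁻¹ β :=
          Finset.mul_prod_erase (Finset.range β) (fun i => 1 - q ^ i * (q ^ β)⁻¹) hb
        have hne : ((1:L) - q ^ b * (q ^ β)⁻¹) ≠ 0 := one_sub_q_pow_ne_zero hbne
        have hEeq : ∏ i ∈ (Finset.range β).erase b, ((1:L) - q ^ i * (q ^ β)⁻¹) =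
            ((1:L) - q ^ b * (q ^ β)⁻¹)⁻¹ * poch (q ^ β)⁻¹ β := by
          rw [← hfac, inv_mul_cancel_left₀ hne]
        rw [hEeq]; ring
      rw [Finset.sum_congr rfl hco, ← Finset.mul_sum] at hIHspec
      exact eq_inv_of_mul_eq_one_right hIHspec
    rw [Finset.sum_range_succ]
    have hlast : (∏ i ∈ (Finset.range (β + 1)).erase β, (1 - q ^ i * x)) *
        (poch (q ^ β)⁻¹ β * poch q (β + 1 - β - 1))⁻¹ =
        (∏ i ∈ Finset.range β, (1 - q ^ i * x)) * (poch (q ^ β)⁻¹ β)⁻¹ := by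
      rw [hranges, show β + 1 - β - 1 = 0 from by omega]
      simp [poch]
    rw [hlast]
    have hmain : ∀ b ∈ Finset.range β,
        (∏ i ∈ (Finset.range (β + 1)).erase b, (1 - q ^ i * x)) *
          (poch (q ^ b)⁻¹ b * poch q (β + 1 - b - 1))⁻¹ =
        (∏ i ∈ (Finset.range β).erase b, (1 - q ^ i * x)) *
          (poch (q ^ b)⁻¹ b * poch q (β - b - 1))⁻¹ -
        (((1:L) - q ^ b * (q ^ β)⁻¹)⁻¹ * (poch (q ^ b)⁻¹ b * poch q (β - b - 1))⁻¹) *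
          ∏ i ∈ Finset.range β, (1 - q ^ i * x) := by
      intro b hb
      have hblt : b < β := Finset.mem_range.mp hb
      have hbne : b ≠ β := by omega
      have hprod : ∏ i ∈ (Finset.range (β + 1)).erase b, (1 - q ^ i * x) =
          (1 - q ^ β * x) * ∏ i ∈ (Finset.range β).erase b, (1 - q ^ i * x) := by
        rw [Finset.range_add_one, Finset.erase_insert_of_ne (Ne.symm hbne),
          Finset.prod_insert (by simp)]
      have hpochsplit : poch q (β + 1 - b - 1) =
          poch q (β - b - 1) * (1 - q ^ (β - b)) := by
        have hn : β + 1 - b - 1 = (β - b - 1) + 1 := by omega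
        have hm : β - b - 1 + 1 = β - b := by omega
        rw [hn]
        unfold poch
        rw [Finset.prod_range_succ, ← pow_succ, hm]
      have hqbb : (1:L) - q ^ (β - b) = 1 - q ^ β * (q ^ b)⁻¹ := by
        rw [pow_sub₀ q q_ne_zero (le_of_lt hblt)]
      have hA : poch (q ^ b)⁻¹ b ≠ 0 := poch_inv_ne_zero b b le_rfl
      have hB : poch q (β - b - 1) ≠ 0 := poch_q_ne_zero _
      have hba : ((1:L) - q ^ β * (q ^ b)⁻¹) ≠ 0 := one_sub_q_pow_ne_zero (Ne.symm hbne)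
      have hab : ((1:L) - q ^ b * (q ^ β)⁻¹) ≠ 0 := one_sub_q_pow_ne_zero hbne
      have hkey := aux_pf (q ^ b) (q ^ β) x (q_pow_ne_zero b) (q_pow_ne_zero β) hba hab
      have hPeq : ((1:L) - q ^ b * x) * ∏ i ∈ (Finset.range β).erase b, (1 - q ^ i * x) =
          ∏ i ∈ Finset.range β, (1 - q ^ i * x) :=
        Finset.mul_prod_erase (Finset.range β) (fun i => 1 - q ^ i * x) hb
      rw [hprod, hpochsplit, hqbb, ← hPeq]
      rw [mul_inv, mul_inv]
      calc (1 - q ^ β * x) * (∏ i ∈ (Finset.range β).erase b, (1 - q ^ i * x)) *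
            ((poch (q ^ b)⁻¹ b)⁻¹ * ((poch q (β - b - 1))⁻¹ * (1 - q ^ β * (q ^ b)⁻¹)⁻¹))
          = ((1 - q ^ β * x) * (1 - q ^ β * (q ^ b)⁻¹)⁻¹) *
            (∏ i ∈ (Finset.range β).erase b, (1 - q ^ i * x)) *
            ((poch (q ^ b)⁻¹ b)⁻¹ * (poch q (β - b - 1))⁻¹) := by ring
        _ = (1 - (1 - q ^ b * (q ^ β)⁻¹)⁻¹ * (1 - q ^ b * x)) *
            (∏ i ∈ (Finset.range β).erase b, (1 - q ^ i * x)) *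
            ((poch (q ^ b)⁻¹ b)⁻¹ * (poch q (β - b - 1))⁻¹) := by rw [hkey]
        _ = _ := by rw [mul_inv]; ring
    rw [Finset.sum_congr rfl hmain, Finset.sum_sub_distrib, ih x, ← Finset.sum_mul,
      hsum_coeff]
    ring

end PFaux

/-- partial fraction decomposition
`1/((z;q)_β) = Σ_{b=0}^{β-1} 1/((1-q^b z)·(q^{-b};q)_b·(q;q)_{β-b-1})`
as rational functions in `z` over `ℚ(q)`, for `β ≥ 1`. -/
theorem inv_poch_partial_fractions (β : ℕ) (hβ : 1 ≤ β) :
    (poch z β)⁻¹ =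
      ∑ b ∈ Finset.range β,
        ((1 - q ^ b * z) * poch ((q ^ b)⁻¹) b * poch q (β - b - 1))⁻¹ := by
  have hkey := PFaux.key β hβ z
  have hterm : ∀ b ∈ Finset.range β,
      (poch z β)⁻¹ * ((∏ i ∈ (Finset.range β).erase b, (1 - q ^ i * z)) *
        (poch (q ^ b)⁻¹ b * poch q (β - b - 1))⁻¹) =
      ((1 - q ^ b * z) * poch ((q ^ b)⁻¹) b * poch q (β - b - 1))⁻¹ := by
    intro b hb
    have hPeq : ((1:L) - q ^ b * z) * ∏ i ∈ (Finset.range β).erase b, (1 - q ^ i * z) =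
        poch z β :=
      Finset.mul_prod_erase (Finset.range β) (fun i => 1 - q ^ i * z) hb
    have hE : (∏ i ∈ (Finset.range β).erase b, ((1:L) - q ^ i * z)) ≠ 0 :=
      Finset.prod_ne_zero_iff.mpr fun i _ => PFaux.one_sub_q_pow_z_ne_zero i
    have hbz : ((1:L) - q ^ b * z) ≠ 0 := PFaux.one_sub_q_pow_z_ne_zero b
    have hA : poch (q ^ b)⁻¹ b ≠ 0 := PFaux.poch_inv_ne_zero b b le_rfl
    have hB : poch q (β - b - 1) ≠ 0 := PFaux.poch_q_ne_zero _
    rw [← hPeq, mul_inv, mul_inv, mul_inv, mul_inv]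
    have hcanc : (∏ i ∈ (Finset.range β).erase b, ((1:L) - q ^ i * z))⁻¹ *
        ∏ i ∈ (Finset.range β).erase b, ((1:L) - q ^ i * z) = 1 := inv_mul_cancel₀ hE
    linear_combination ((1 - q ^ b * z)⁻¹ * (poch (q ^ b)⁻¹ b)⁻¹ *
      (poch q (β - b - 1))⁻¹) * hcanc
  calc (poch z β)⁻¹ = (poch z β)⁻¹ *
        ∑ b ∈ Finset.range β, (∏ i ∈ (Finset.range β).erase b, (1 - q ^ i * z)) *
          (poch (q ^ b)⁻¹ b * poch q (β - b - 1))⁻¹ := by rw [hkey, mul_one]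
    _ = _ := by rw [Finset.mul_sum, Finset.sum_congr rfl hterm]
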